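/- Let H : [0,∞) → (1/2,1) be measurable and let s, t ≥ 0 be such that H_t = H_s. Then R_H(t,s) = (1/2)( s^{2H_t} + t^{2H_t} − |t−s|^{2H_t} ). In particular, R_H(t,t) = t^{2H_t} for all t ≥ 0. -/

import Mathlib

open MeasureTheory Set Filter
open scoped ENNReal

/-- The Beta function `β(x,y) = Γ(x)Γ(y)/Γ(x+y)`. -/
noncomputable def Beta (x y : ℝ) : ℝ := Real.Gamma x * Real.Gamma y / Real.Gamma (x + y)

/-- The normalizing constant `c_H = (H(2H−1)/β(2−2H, H−1/2))^{1/2}`. -/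
noncomputable def cH (H : ℝ) : ℝ := Real.sqrt (H * (2 * H - 1) / Beta (2 - 2 * H) (H - 1 / 2))

/-- The kernel `K_H(t,s)`; equal to
`c_{H_t} s^{1/2−H_t} ∫_s^t (u−s)^{H_t−3/2} u^{H_t−1/2} du` for `s ≤ t` and `0` for `s > t`. -/
noncomputable def KH (H : ℝ → ℝ) (t s : ℝ) : ℝ :=
  if s ≤ t then
    cH (H t) * s ^ ((1 : ℝ) / 2 - H t) *
      ∫ u in s..t, (u - s) ^ (H t - 3 / 2) * u ^ (H t - 1 / 2)
  else 0

/-- The covariance function `R_H(t,s) = ∫_0^{min(s,t)} K_H(t,u) K_H(s,u) du`. -/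
noncomputable def RH (H : ℝ → ℝ) (t s : ℝ) : ℝ :=
  ∫ u in (0 : ℝ)..(min s t), KH H t u * KH H s u

namespace FBMAux

/-- The kernel with a fixed Hurst parameter. -/
noncomputable def Kc (h t s : ℝ) : ℝ :=
  if s ≤ t then
    cH h * s ^ ((1 : ℝ) / 2 - h) *
      ∫ u in s..t, (u - s) ^ (h - 3 / 2) * u ^ (h - 1 / 2)
  else 0

lemma KH_eq_Kc (H : ℝ → ℝ) (t s : ℝ) : KH H t s = Kc (H t) t s := rfl

/-- kernel integrand -/
noncomputable def Fk (h u x : ℝ) : ℝ := (x - u) ^ (h - 3 / 2) * x ^ (h - 1 / 2)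

/-- master integrand -/
noncomputable def W (h u x y : ℝ) : ℝ := u ^ (1 - 2 * h) * Fk h u x * Fk h u y

noncomputable def WE (h u x y : ℝ) : ℝ≥0∞ := ENNReal.ofReal (W h u x y)

/-- measurable version of the inner kernel integral -/
noncomputable def M (h r u : ℝ) : ℝ := ∫ x, (if u < x ∧ x < r then Fk h u x else 0)

lemma Fk_nonneg (h : ℝ) {u x : ℝ} (hu : u ≤ x) (hx : 0 ≤ x) : 0 ≤ Fk h u x :=
  mul_nonneg (Real.rpow_nonneg (sub_nonneg.2 hu) _) (Real.rpow_nonneg hx _)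

lemma intInt_Fk (h : ℝ) (hh : 1 / 2 < h) {u r : ℝ} (hu : 0 < u) (hur : u ≤ r) :
    IntervalIntegrable (Fk h u) volume u r := by
  have h1 : IntervalIntegrable (fun x => (x - u) ^ (h - 3 / 2)) volume u r := by
    have := (intervalIntegral.intervalIntegrable_rpow' (a := 0) (b := r - u)
      (r := h - 3 / 2) (by linarith)).comp_sub_right u
    simpa using this
  apply h1.mul_continuousOn
  apply ContinuousOn.rpow_const continuousOn_id
  intro x hx
  rw [uIcc_of_le hur] at hx
  exact Or.inl (ne_of_gt (lt_of_lt_of_le hu hx.1))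

lemma integrableOn_Fk (h : ℝ) (hh : 1 / 2 < h) {u r : ℝ} (hu : 0 < u) (hur : u ≤ r) :
    IntegrableOn (Fk h u) (Ioo u r) :=
  ((intervalIntegrable_iff_integrableOn_Ioc_of_le hur).1 (intInt_Fk h hh hu hur)).mono_set
    Ioo_subset_Ioc_self

lemma M_eq (h r u : ℝ) : M h r u = ∫ x in Ioo u r, Fk h u x := by
  rw [M, ← integral_indicator measurableSet_Ioo]
  congr 1
  funext x
  simp [indicator_apply, mem_Ioo]

lemma measurable_M (h r : ℝ) : Measurable (M h r) := by
  have hg : Measurable fun p : ℝ × ℝ => if p.1 < p.2 ∧ p.2 < r then Fk h p.1 p.2 else 0 := by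
    apply Measurable.ite
    · exact (measurableSet_lt measurable_fst measurable_snd).inter
        (measurableSet_lt measurable_snd measurable_const)
    · unfold Fk; fun_prop
    · exact measurable_const
  exact (MeasureTheory.StronglyMeasurable.integral_prod_right
    (f := fun u x => if u < x ∧ x < r then Fk h u x else 0)
    hg.stronglyMeasurable).measurable

lemma M_nonneg (h : ℝ) {r u : ℝ} (hu : 0 ≤ u) : 0 ≤ M h r u := by
  rw [M_eq]
  exact setIntegral_nonneg measurableSet_Ioo fun x hx =>
    Fk_nonneg h hx.1.le (hu.trans hx.1.le)

lemma ofReal_M (h : ℝ) (hh : 1 / 2 < h) {u r : ℝ} (hu : 0 < u) (hur : u ≤ r) :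
    ENNReal.ofReal (M h r u) = ∫⁻ x in Ioo u r, ENNReal.ofReal (Fk h u x) := by
  rw [M_eq]
  exact ofReal_integral_eq_lintegral_ofReal (integrableOn_Fk h hh hu hur)
    ((ae_restrict_iff' measurableSet_Ioo).2 (ae_of_all _ fun x hx =>
      Fk_nonneg h hx.1.le (hu.le.trans hx.1.le)))

lemma Beta_pos {h : ℝ} (hh : 1 / 2 < h) (hh2 : h < 1) : 0 < Beta (2 - 2 * h) (h - 1 / 2) := by
  unfold Beta
  exact div_pos (mul_pos (Real.Gamma_pos_of_pos (by linarith))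
    (Real.Gamma_pos_of_pos (by linarith)))
    (Real.Gamma_pos_of_pos (by linarith))

lemma cH_sq {h : ℝ} (hh : 1 / 2 < h) (hh2 : h < 1) :
    cH h ^ 2 = h * (2 * h - 1) / Beta (2 - 2 * h) (h - 1 / 2) := by
  rw [cH, Real.sq_sqrt]
  exact le_of_lt (div_pos (mul_pos (by linarith) (by linarith)) (Beta_pos hh hh2))

lemma intInt_beta {h : ℝ} (hh : 1 / 2 < h) (hh2 : h < 1) :
    IntervalIntegrable (fun v : ℝ => v ^ (1 - 2 * h) * (1 - v) ^ (h - 3 / 2)) volume 0 1 := by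
  have A : IntervalIntegrable (fun v : ℝ => v ^ (1 - 2 * h) * (1 - v) ^ (h - 3 / 2))
      volume 0 (1 / 2) := by
    apply (intervalIntegral.intervalIntegrable_rpow' (r := 1 - 2 * h)
      (by linarith)).mul_continuousOn
    apply ContinuousOn.rpow_const (continuousOn_const.sub continuousOn_id)
    intro x hx
    rw [uIcc_of_le (by norm_num : (0:ℝ) ≤ 1 / 2)] at hx
    exact Or.inl (by show (1:ℝ) - x ≠ 0; intro hc; have := hx.2; nlinarith)
  have B : IntervalIntegrable (fun v : ℝ => v ^ (1 - 2 * h) * (1 - v) ^ (h - 3 / 2))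
      volume (1 / 2) 1 := by
    have base : IntervalIntegrable (fun v : ℝ => (1 - v) ^ (h - 3 / 2)) volume (1 / 2) 1 := by
      have := (intervalIntegral.intervalIntegrable_rpow' (a := 0) (b := 1 / 2)
        (r := h - 3 / 2) (by linarith)).comp_sub_left 1
      norm_num at this
      exact this.symm
    have := base.mul_continuousOn (g := fun v : ℝ => v ^ (1 - 2 * h)) ?_
    · have heq : (fun v : ℝ => v ^ (1 - 2 * h) * (1 - v) ^ (h - 3 / 2))
          = fun v : ℝ => (1 - v) ^ (h - 3 / 2) * v ^ (1 - 2 * h) := funext fun v => mul_comm _ _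
      rw [heq]; exact this
    · apply ContinuousOn.rpow_const continuousOn_id
      intro x hx
      rw [uIcc_of_le (by norm_num : (1:ℝ) / 2 ≤ 1)] at hx
      exact Or.inl (by simp only [id_eq]; intro hc; have := hx.1; linarith)
  exact A.trans B

lemma betaIntegral_eval {h : ℝ} (hh : 1 / 2 < h) (hh2 : h < 1) :
    ∫ v in (0:ℝ)..1, v ^ (1 - 2 * h) * (1 - v) ^ (h - 3 / 2) = Beta (2 - 2 * h) (h - 1 / 2) := by
  set a : ℝ := 2 - 2 * h with ha
  set b : ℝ := h - 1 / 2 with hb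
  have ha1 : a - 1 = 1 - 2 * h := by rw [ha]; ring
  have hb1 : b - 1 = h - 3 / 2 := by rw [hb]; ring
  have hkey : Complex.betaIntegral (a : ℂ) (b : ℂ)
      = ((∫ v in (0:ℝ)..1, v ^ (1 - 2 * h) * (1 - v) ^ (h - 3 / 2) : ℝ) : ℂ) := by
    rw [Complex.betaIntegral, ← intervalIntegral.integral_ofReal]
    apply intervalIntegral.integral_congr
    intro x hx
    rw [uIcc_of_le zero_le_one] at hx
    show (x : ℂ) ^ ((a : ℂ) - 1) * (1 - (x : ℂ)) ^ ((b : ℂ) - 1)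
        = ((x ^ (1 - 2 * h) * (1 - x) ^ (h - 3 / 2) : ℝ) : ℂ)
    rw [← ha1, ← hb1]
    rw [Complex.ofReal_mul, Complex.ofReal_cpow hx.1,
      Complex.ofReal_cpow (by linarith [hx.2] : (0:ℝ) ≤ 1 - x)]
    push_cast
    ring
  have h1 := Complex.Gamma_mul_Gamma_eq_betaIntegral (s := (a : ℂ)) (t := (b : ℂ))
    (by simp [ha]; linarith) (by simp [hb]; linarith)
  rw [hkey] at h1
  have h2 : ((Real.Gamma a * Real.Gamma b : ℝ) : ℂ)
      = ((Real.Gamma (a + b) * ∫ v in (0:ℝ)..1, v ^ (1 - 2 * h) * (1 - v) ^ (h - 3 / 2) : ℝ) : ℂ) := by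
    push_cast
    rw [← Complex.Gamma_ofReal, ← Complex.Gamma_ofReal, ← Complex.Gamma_ofReal]
    push_cast at h1 ⊢
    exact h1
  have h3 : Real.Gamma a * Real.Gamma b
      = Real.Gamma (a + b) * ∫ v in (0:ℝ)..1, v ^ (1 - 2 * h) * (1 - v) ^ (h - 3 / 2) := by
    exact_mod_cast h2
  have hG : Real.Gamma (a + b) ≠ 0 := (Real.Gamma_pos_of_pos (by rw [ha, hb]; linarith)).ne'
  rw [Beta]
  rw [eq_div_iff hG]
  linear_combination -1 * h3

lemma lintegral_beta {h : ℝ} (hh : 1 / 2 < h) (hh2 : h < 1) :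
    ∫⁻ v in Ioo (0:ℝ) 1, ENNReal.ofReal (v ^ (1 - 2 * h) * (1 - v) ^ (h - 3 / 2))
      = ENNReal.ofReal (Beta (2 - 2 * h) (h - 1 / 2)) := by
  rw [← betaIntegral_eval hh hh2, intervalIntegral.integral_of_le zero_le_one,
    ← setIntegral_congr_set Ioo_ae_eq_Ioc]
  rw [ofReal_integral_eq_lintegral_ofReal]
  · exact ((intervalIntegrable_iff_integrableOn_Ioc_of_le zero_le_one).1
      (intInt_beta hh hh2)).mono_set Ioo_subset_Ioc_self
  · exact (ae_restrict_iff' measurableSet_Ioo).2 (ae_of_all _ fun v hv =>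
      mul_nonneg (Real.rpow_nonneg hv.1.le _) (Real.rpow_nonneg (by linarith [hv.2]) _))

lemma lintegral_image_abs_deriv {s : Set ℝ} {f f' : ℝ → ℝ} (hs : MeasurableSet s)
    (hf' : ∀ x ∈ s, HasDerivWithinAt f (f' x) s x) (hf : InjOn f s) (g : ℝ → ℝ≥0∞) :
    ∫⁻ x in f '' s, g x = ∫⁻ x in s, ENNReal.ofReal |f' x| * g (f x) := by
  simpa only [ContinuousLinearMap.det_toSpanSingleton] using
    MeasureTheory.lintegral_image_eq_lintegral_abs_det_fderiv_mul volume hs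
      (fun x hx => (hf' x hx).hasFDerivWithinAt) hf g

lemma cov_alg {h x y u : ℝ} (hu : 0 < u) (hy : 0 < y) (hx : 0 < x)
    (hxu : 0 < x - u) (hyu : 0 < y - u) (hxy : 0 < x - y) :
    x * (x - y) / (y * (x - u) ^ 2) *
      ((u * (x - y) / (y * (x - u))) ^ (1 - 2 * h) *
        (x * (y - u) / (y * (x - u))) ^ (h - 3 / 2))
    = (x * y) ^ (h - 1 / 2) * (x - y) ^ (2 - 2 * h) *
        (u ^ (1 - 2 * h) * ((x - u) ^ (h - 3 / 2) * (y - u) ^ (h - 3 / 2))) := by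
  have m1 : (0:ℝ) < u * (x - y) / (y * (x - u)) := by positivity
  have m2 : (0:ℝ) < x * (y - u) / (y * (x - u)) := by positivity
  refine Real.log_injOn_pos (Set.mem_Ioi.2 (by positivity)) (Set.mem_Ioi.2 (by positivity)) ?_
  simp (disch := positivity) only [Real.log_mul, Real.log_div, Real.log_rpow, Real.log_pow]
  push_cast
  ring

lemma cov_change {h : ℝ} (hh : 1 / 2 < h) (hh2 : h < 1) {x y : ℝ} (hy : 0 < y) (hyx : y < x) :
    ∫⁻ u in Ioo 0 y, ENNReal.ofReal (u ^ (1 - 2 * h) * ((x - u) ^ (h - 3 / 2) * (y - u) ^ (h - 3 / 2)))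
      = ENNReal.ofReal ((x * y) ^ ((1:ℝ) / 2 - h) * (x - y) ^ (2 * h - 2)) *
        ∫⁻ v in Ioo (0:ℝ) 1, ENNReal.ofReal (v ^ (1 - 2 * h) * (1 - v) ^ (h - 3 / 2)) := by
  have hx : 0 < x := hy.trans hyx
  have hxy : 0 < x - y := by linarith
  set g : ℝ → ℝ := fun u => (x - y) / y * (u / (x - u)) with hg
  set gd : ℝ → ℝ := fun u => x * (x - y) / (y * (x - u) ^ 2) with hgd
  have h_deriv : ∀ u ∈ Ioo (0:ℝ) y, HasDerivWithinAt g (gd u) (Ioo 0 y) u := by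
    intro u hu
    have hxu : x - u ≠ 0 := by have := hu.2; intro hc; nlinarith
    have d1 : HasDerivAt (fun v : ℝ => v / (x - v))
        ((1 * (x - u) - u * (0 - 1)) / (x - u) ^ 2) u :=
      (hasDerivAt_id u).div ((hasDerivAt_const u x).sub (hasDerivAt_id u)) hxu
    have d2 := d1.const_mul ((x - y) / y)
    have : (x - y) / y * ((1 * (x - u) - u * (0 - 1)) / (x - u) ^ 2) = gd u := by
      rw [hgd]
      field_simp
      ring
    rw [this] at d2
    exact d2.hasDerivWithinAt
  have h_inj : InjOn g (Ioo 0 y) := by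
    intro u1 h1 u2 h2 heq
    have hxu1 : x - u1 ≠ 0 := by have := h1.2; intro hc; nlinarith
    have hxu2 : x - u2 ≠ 0 := by have := h2.2; intro hc; nlinarith
    rw [hg] at heq
    simp only at heq
    field_simp [hxy.ne'] at heq
    have h4 : (x - y) * y * x * (u1 - u2) = 0 := by linear_combination (x - y) * y * heq
    have h5 := (mul_eq_zero.mp h4).resolve_left (by positivity)
    linarith [sub_eq_zero.mp h5]
  have h_img : g '' Ioo 0 y = Ioo 0 1 := by
    ext v
    simp only [mem_image, mem_Ioo]
    constructor
    · rintro ⟨u, ⟨hu0, huy⟩, rfl⟩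
      have hxu : 0 < x - u := by linarith
      constructor
      · exact mul_pos (div_pos hxy hy) (div_pos hu0 hxu)
      · have he : g u = (x - y) * u / (y * (x - u)) := by
          rw [hg]
          simp only
          rw [eq_div_iff (by positivity : y * (x - u) ≠ 0)]
          field_simp
        rw [he, div_lt_one (by positivity)]
        nlinarith
    · rintro ⟨hv0, hv1⟩
      have hD : 0 < x - y + v * y := by nlinarith
      refine ⟨v * x * y / (x - y + v * y), ⟨by positivity, ?_⟩, ?_⟩
      · rw [div_lt_iff₀ hD]
        nlinarith [mul_pos hy (mul_pos hxy (show (0:ℝ) < 1 - v by linarith))]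
      · rw [hg]
        simp only
        have hkey : x - v * x * y / (x - y + v * y) = x * (x - y) / (x - y + v * y) := by
          field_simp
          ring
        rw [hkey]
        field_simp
  have himg := lintegral_image_abs_deriv (s := Ioo 0 y) measurableSet_Ioo h_deriv h_inj
    (fun v => ENNReal.ofReal (v ^ (1 - 2 * h) * (1 - v) ^ (h - 3 / 2)))
  rw [h_img] at himg
  have hKpos : (0:ℝ) < (x * y) ^ (h - 1 / 2) * (x - y) ^ (2 - 2 * h) := by positivity
  have hpt : ∫⁻ u in Ioo (0:ℝ) y, ENNReal.ofReal |gd u| *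
        ENNReal.ofReal ((g u) ^ (1 - 2 * h) * (1 - g u) ^ (h - 3 / 2))
      = ENNReal.ofReal ((x * y) ^ (h - 1 / 2) * (x - y) ^ (2 - 2 * h)) *
        ∫⁻ u in Ioo (0:ℝ) y,
          ENNReal.ofReal (u ^ (1 - 2 * h) * ((x - u) ^ (h - 3 / 2) * (y - u) ^ (h - 3 / 2))) := by
    rw [← lintegral_const_mul' _ _ ENNReal.ofReal_ne_top]
    apply setLIntegral_congr_fun_ae measurableSet_Ioo
    apply ae_of_all
    intro u hu
    have hu0 : 0 < u := hu.1
    have hxu : 0 < x - u := by have := hu.2; linarith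
    have hyu : 0 < y - u := by have := hu.2; linarith
    have hgu : g u = u * (x - y) / (y * (x - u)) := by
      rw [hg]
      simp only
      rw [eq_div_iff (by positivity : y * (x - u) ≠ 0)]
      field_simp
    have hg1u : 1 - g u = x * (y - u) / (y * (x - u)) := by
      rw [hgu, eq_div_iff (by positivity : y * (x - u) ≠ 0)]
      field_simp
      ring
    have hgdpos : 0 < gd u := by rw [hgd]; positivity
    rw [← ENNReal.ofReal_mul (abs_nonneg _), ← ENNReal.ofReal_mul hKpos.le]
    congr 1
    rw [abs_of_pos hgdpos, hg1u, hgu, hgd]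
    exact cov_alg hu0 hy hx hxu hyu hxy
  rw [hpt] at himg
  have hKinv : (x * y) ^ ((1:ℝ) / 2 - h) * (x - y) ^ (2 * h - 2)
      = ((x * y) ^ (h - 1 / 2) * (x - y) ^ (2 - 2 * h))⁻¹ := by
    rw [show (1:ℝ) / 2 - h = -(h - 1 / 2) by ring, show 2 * h - 2 = -(2 - 2 * h) by ring,
      Real.rpow_neg (by positivity), Real.rpow_neg hxy.le, mul_inv]
  rw [hKinv, ENNReal.ofReal_inv_of_pos hKpos, himg, ← mul_assoc,
    ENNReal.inv_mul_cancel (ENNReal.ofReal_pos.2 hKpos).ne' ENNReal.ofReal_ne_top, one_mul]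

lemma inner_u {h : ℝ} (hh : 1 / 2 < h) (hh2 : h < 1) {x y : ℝ} (hx : 0 < x) (hy : 0 < y)
    (hxy : x ≠ y) :
    ∫⁻ u in Ioo 0 (min x y), WE h u x y
      = ENNReal.ofReal (Beta (2 - 2 * h) (h - 1 / 2)) * ENNReal.ofReal (|x - y| ^ (2 * h - 2)) := by
  have hc : (0:ℝ) ≤ x ^ (h - 1 / 2) * y ^ (h - 1 / 2) := by positivity
  have step1 : ∫⁻ u in Ioo 0 (min x y), WE h u x y
      = ENNReal.ofReal (x ^ (h - 1 / 2) * y ^ (h - 1 / 2)) *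
        ∫⁻ u in Ioo 0 (min x y),
          ENNReal.ofReal (u ^ (1 - 2 * h) * ((x - u) ^ (h - 3 / 2) * (y - u) ^ (h - 3 / 2))) := by
    rw [← lintegral_const_mul' _ _ ENNReal.ofReal_ne_top]
    apply setLIntegral_congr_fun_ae measurableSet_Ioo
    apply ae_of_all
    intro u _
    rw [WE, ← ENNReal.ofReal_mul hc]
    congr 1
    unfold W Fk
    ring
  rw [step1]
  rcases lt_or_gt_of_ne hxy with hlt | hgt
  · -- x < y, min = x
    rw [min_eq_left hlt.le]
    have hcong : ∫⁻ u in Ioo (0:ℝ) x,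
          ENNReal.ofReal (u ^ (1 - 2 * h) * ((x - u) ^ (h - 3 / 2) * (y - u) ^ (h - 3 / 2)))
        = ∫⁻ u in Ioo (0:ℝ) x,
          ENNReal.ofReal (u ^ (1 - 2 * h) * ((y - u) ^ (h - 3 / 2) * (x - u) ^ (h - 3 / 2))) := by
      apply setLIntegral_congr_fun_ae measurableSet_Ioo
      apply ae_of_all
      intro u _
      congr 1
      ring
    rw [hcong, cov_change hh hh2 hx hlt, lintegral_beta hh hh2]
    have hyx : 0 < y - x := by linarith
    have habs : |x - y| = y - x := by rw [abs_of_neg (by linarith)]; ring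
    rw [habs]
    have hTK : ENNReal.ofReal (x ^ (h - 1 / 2) * y ^ (h - 1 / 2)) *
        ENNReal.ofReal ((y * x) ^ ((1:ℝ) / 2 - h) * (y - x) ^ (2 * h - 2))
        = ENNReal.ofReal ((y - x) ^ (2 * h - 2)) := by
      rw [← ENNReal.ofReal_mul hc]
      congr 1
      refine Real.log_injOn_pos (Set.mem_Ioi.2 (by positivity)) (Set.mem_Ioi.2 (by positivity)) ?_
      simp (disch := positivity) only [Real.log_mul, Real.log_rpow]
      ring
    calc ENNReal.ofReal (x ^ (h - 1 / 2) * y ^ (h - 1 / 2)) *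
          (ENNReal.ofReal ((y * x) ^ ((1:ℝ) / 2 - h) * (y - x) ^ (2 * h - 2)) *
            ENNReal.ofReal (Beta (2 - 2 * h) (h - 1 / 2)))
        = ENNReal.ofReal (Beta (2 - 2 * h) (h - 1 / 2)) *
          (ENNReal.ofReal (x ^ (h - 1 / 2) * y ^ (h - 1 / 2)) *
            ENNReal.ofReal ((y * x) ^ ((1:ℝ) / 2 - h) * (y - x) ^ (2 * h - 2))) := by ring
      _ = ENNReal.ofReal (Beta (2 - 2 * h) (h - 1 / 2)) *
            ENNReal.ofReal ((y - x) ^ (2 * h - 2)) := by rw [hTK]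
  · -- y < x, min = y
    rw [min_eq_right hgt.le]
    rw [cov_change hh hh2 hy hgt, lintegral_beta hh hh2]
    have hxy' : 0 < x - y := by linarith
    have habs : |x - y| = x - y := abs_of_pos hxy'
    rw [habs]
    have hTK : ENNReal.ofReal (x ^ (h - 1 / 2) * y ^ (h - 1 / 2)) *
        ENNReal.ofReal ((x * y) ^ ((1:ℝ) / 2 - h) * (x - y) ^ (2 * h - 2))
        = ENNReal.ofReal ((x - y) ^ (2 * h - 2)) := by
      rw [← ENNReal.ofReal_mul hc]
      congr 1
      refine Real.log_injOn_pos (Set.mem_Ioi.2 (by positivity)) (Set.mem_Ioi.2 (by positivity)) ?_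
      simp (disch := positivity) only [Real.log_mul, Real.log_rpow]
      ring
    calc ENNReal.ofReal (x ^ (h - 1 / 2) * y ^ (h - 1 / 2)) *
          (ENNReal.ofReal ((x * y) ^ ((1:ℝ) / 2 - h) * (x - y) ^ (2 * h - 2)) *
            ENNReal.ofReal (Beta (2 - 2 * h) (h - 1 / 2)))
        = ENNReal.ofReal (Beta (2 - 2 * h) (h - 1 / 2)) *
          (ENNReal.ofReal (x ^ (h - 1 / 2) * y ^ (h - 1 / 2)) *
            ENNReal.ofReal ((x * y) ^ ((1:ℝ) / 2 - h) * (x - y) ^ (2 * h - 2))) := by ring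
      _ = ENNReal.ofReal (Beta (2 - 2 * h) (h - 1 / 2)) *
            ENNReal.ofReal ((x - y) ^ (2 * h - 2)) := by rw [hTK]

lemma lintegral_swap3 (f : ℝ → ℝ → ℝ → ℝ≥0∞)
    (hf : Measurable fun p : ℝ × ℝ × ℝ => f p.1 p.2.1 p.2.2) :
    ∫⁻ u, ∫⁻ x, ∫⁻ y, f u x y = ∫⁻ x, ∫⁻ y, ∫⁻ u, f u x y := by
  have m1 : Measurable fun p : (ℝ × ℝ) × ℝ => f p.1.1 p.1.2 p.2 :=
    hf.comp (by fun_prop : Measurable fun p : (ℝ × ℝ) × ℝ => (p.1.1, p.1.2, p.2))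
  have step1 : ∫⁻ u, ∫⁻ x, ∫⁻ y, f u x y = ∫⁻ x, ∫⁻ u, ∫⁻ y, f u x y := by
    apply lintegral_lintegral_swap
    exact (Measurable.lintegral_prod_right' m1).aemeasurable
  rw [step1]
  refine lintegral_congr fun x => ?_
  apply lintegral_lintegral_swap
  exact (hf.comp (by fun_prop : Measurable fun p : ℝ × ℝ => (p.1, x, p.2))).aemeasurable

/-- indicator form of the triple integrand -/
noncomputable def V (h t s u x y : ℝ) : ℝ≥0∞ :=
  if 0 < u ∧ u < x ∧ x < t ∧ u < y ∧ y < s then WE h u x y else 0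

lemma measurable_W (h : ℝ) : Measurable fun p : ℝ × ℝ × ℝ => W h p.1 p.2.1 p.2.2 := by
  unfold W Fk
  fun_prop

lemma measurable_V (h t s : ℝ) : Measurable fun p : ℝ × ℝ × ℝ => V h t s p.1 p.2.1 p.2.2 := by
  unfold V WE
  apply Measurable.ite
  · have : {p : ℝ × ℝ × ℝ | 0 < p.1 ∧ p.1 < p.2.1 ∧ p.2.1 < t ∧ p.1 < p.2.2 ∧ p.2.2 < s}
        = {p : ℝ × ℝ × ℝ | 0 < p.1} ∩ ({p | p.1 < p.2.1} ∩ ({p | p.2.1 < t}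
          ∩ ({p | p.1 < p.2.2} ∩ {p | p.2.2 < s}))) := by
      ext p; simp [and_assoc]
    rw [this]
    exact (measurableSet_lt measurable_const measurable_fst).inter
      ((measurableSet_lt measurable_fst (measurable_fst.comp measurable_snd)).inter
        ((measurableSet_lt (measurable_fst.comp measurable_snd) measurable_const).inter
          ((measurableSet_lt measurable_fst (measurable_snd.comp measurable_snd)).inter
            (measurableSet_lt (measurable_snd.comp measurable_snd) measurable_const))))
  · exact (measurable_W h).ennreal_ofReal
  · exact measurable_const

lemma left_eq (h t s : ℝ) (hst : s ≤ t) :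
    ∫⁻ u in Ioo 0 s, ∫⁻ x in Ioo u t, ∫⁻ y in Ioo u s, WE h u x y
      = ∫⁻ u, ∫⁻ x, ∫⁻ y, V h t s u x y := by
  rw [← lintegral_indicator measurableSet_Ioo]
  refine lintegral_congr fun u => ?_
  by_cases hu : u ∈ Ioo (0:ℝ) s
  · rw [indicator_of_mem hu]
    rw [← lintegral_indicator measurableSet_Ioo]
    refine lintegral_congr fun x => ?_
    by_cases hx : x ∈ Ioo u t
    · rw [indicator_of_mem hx, ← lintegral_indicator measurableSet_Ioo]
      refine lintegral_congr fun y => ?_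
      by_cases hy : y ∈ Ioo u s
      · rw [indicator_of_mem hy]
        unfold V
        rw [if_pos ⟨hu.1, hx.1, hx.2, hy.1, hy.2⟩]
      · rw [indicator_of_notMem hy]
        unfold V
        rw [if_neg]
        rintro ⟨-, -, -, h4, h5⟩
        exact hy ⟨h4, h5⟩
    · rw [indicator_of_notMem hx]
      have hz : ∀ y, V h t s u x y = 0 := fun y => if_neg (by
        rintro ⟨-, h2, h3, -, -⟩; exact hx ⟨h2, h3⟩)
      simp [hz]
  · rw [indicator_of_notMem hu]
    have hz : ∀ x y, V h t s u x y = 0 := fun x y => if_neg (by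
      rintro ⟨h1, -, -, h4, h5⟩; exact hu ⟨h1, h4.trans h5⟩)
    simp [hz]

lemma right_eq (h t s : ℝ) :
    ∫⁻ x, ∫⁻ y, ∫⁻ u, V h t s u x y
      = ∫⁻ x in Ioo 0 t, ∫⁻ y in Ioo 0 s, ∫⁻ u in Ioo 0 (min x y), WE h u x y := by
  symm
  rw [← lintegral_indicator measurableSet_Ioo]
  refine lintegral_congr fun x => ?_
  by_cases hx : x ∈ Ioo (0:ℝ) t
  · rw [indicator_of_mem hx, ← lintegral_indicator measurableSet_Ioo]
    refine lintegral_congr fun y => ?_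
    by_cases hy : y ∈ Ioo (0:ℝ) s
    · rw [indicator_of_mem hy, ← lintegral_indicator measurableSet_Ioo]
      refine lintegral_congr fun u => ?_
      by_cases hu : u ∈ Ioo 0 (min x y)
      · rw [indicator_of_mem hu]
        unfold V
        rw [if_pos ⟨hu.1, (lt_min_iff.1 hu.2).1, hx.2, (lt_min_iff.1 hu.2).2, hy.2⟩]
      · rw [indicator_of_notMem hu]
        unfold V
        rw [if_neg]
        rintro ⟨h1, h2, -, h4, -⟩
        exact hu ⟨h1, lt_min h2 h4⟩
    · rw [indicator_of_notMem hy]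
      have hz : ∀ u, V h t s u x y = 0 := fun u => if_neg (by
        rintro ⟨h1, -, -, h4, h5⟩; exact hy ⟨h1.trans h4, h5⟩)
      simp [hz]
  · rw [indicator_of_notMem hx]
    have hz : ∀ y u, V h t s u x y = 0 := fun y u => if_neg (by
      rintro ⟨h1, h2, h3, -, -⟩; exact hx ⟨h1.trans h2, h3⟩)
    simp [hz]

lemma real_superadd {p a b : ℝ} (hp : 1 ≤ p) (ha : 0 ≤ a) (hb : 0 ≤ b) :
    a ^ p + b ^ p ≤ (a + b) ^ p := by
  have := NNReal.add_rpow_le_rpow_add (a.toNNReal) (b.toNNReal) hp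
  rw [← NNReal.coe_le_coe] at this
  push_cast at this
  rwa [Real.coe_toNNReal _ ha, Real.coe_toNNReal _ hb] at this

lemma inner_y_le {h : ℝ} (hh : 1 / 2 < h) (hh2 : h < 1) {s x : ℝ} (hx : 0 < x) (hxs : x ≤ s) :
    ∫⁻ y in Ioo 0 s, ENNReal.ofReal (|x - y| ^ (2 * h - 2))
      = ENNReal.ofReal ((x ^ (2 * h - 1) + (s - x) ^ (2 * h - 1)) / (2 * h - 1)) := by
  have hgam : (-1:ℝ) < 2 * h - 2 := by linarith
  have h2h1 : (0:ℝ) < 2 * h - 1 := by linarith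
  have hsx' : (0:ℝ) ≤ s - x := by linarith
  have he : 2 * h - 2 + 1 = 2 * h - 1 := by ring
  have hdisj : Disjoint (Ioo (0:ℝ) x) (Ico x s) := by
    rw [Set.disjoint_left]
    rintro y h1 h2
    exact absurd h2.1 (not_le.2 h1.2)
  have hA : ∫⁻ y in Ioo (0:ℝ) x, ENNReal.ofReal (|x - y| ^ (2 * h - 2))
      = ENNReal.ofReal (x ^ (2 * h - 1) / (2 * h - 1)) := by
    have hcong : ∫⁻ y in Ioo (0:ℝ) x, ENNReal.ofReal (|x - y| ^ (2 * h - 2))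
        = ∫⁻ y in Ioo (0:ℝ) x, ENNReal.ofReal ((x - y) ^ (2 * h - 2)) :=
      setLIntegral_congr_fun_ae measurableSet_Ioo (ae_of_all _ fun y hy => by
        rw [abs_of_pos (sub_pos.2 hy.2)])
    rw [hcong]
    have hii : IntervalIntegrable (fun y => (x - y) ^ (2 * h - 2)) volume 0 x := by
      have := (intervalIntegral.intervalIntegrable_rpow' (a := 0) (b := x) hgam).comp_sub_left x
      norm_num at this
      exact this.symm
    rw [← ofReal_integral_eq_lintegral_ofReal
      (((intervalIntegrable_iff_integrableOn_Ioc_of_le hx.le).1 hii).mono_set Ioo_subset_Ioc_self)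
      ((ae_restrict_iff' measurableSet_Ioo).2 (ae_of_all _ fun y hy =>
        Real.rpow_nonneg (by linarith [hy.2]) _))]
    congr 1
    rw [setIntegral_congr_set Ioo_ae_eq_Ioc, ← intervalIntegral.integral_of_le hx.le,
      intervalIntegral.integral_comp_sub_left (fun z => z ^ (2 * h - 2)) x, sub_self, sub_zero,
      integral_rpow (Or.inl hgam), he,
      Real.zero_rpow (by linarith : 2 * h - 1 ≠ 0), sub_zero]
  have hB : ∫⁻ y in Ico x s, ENNReal.ofReal (|x - y| ^ (2 * h - 2))
      = ENNReal.ofReal ((s - x) ^ (2 * h - 1) / (2 * h - 1)) := by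
    rw [setLIntegral_congr Ico_ae_eq_Ioc]
    have hcong2 : ∫⁻ y in Ioc x s, ENNReal.ofReal (|x - y| ^ (2 * h - 2))
        = ∫⁻ y in Ioc x s, ENNReal.ofReal ((y - x) ^ (2 * h - 2)) :=
      setLIntegral_congr_fun_ae measurableSet_Ioc (ae_of_all _ fun y hy => by
        rw [abs_sub_comm, abs_of_pos (sub_pos.2 hy.1)])
    rw [hcong2]
    have hii : IntervalIntegrable (fun y => (y - x) ^ (2 * h - 2)) volume x s := by
      have := (intervalIntegral.intervalIntegrable_rpow' (a := 0) (b := s - x)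
        hgam).comp_sub_right x
      rw [zero_add, sub_add_cancel] at this
      exact this
    rw [← ofReal_integral_eq_lintegral_ofReal
      ((intervalIntegrable_iff_integrableOn_Ioc_of_le hxs).1 hii)
      ((ae_restrict_iff' measurableSet_Ioc).2 (ae_of_all _ fun y hy =>
        Real.rpow_nonneg (by linarith [hy.1]) _))]
    congr 1
    rw [← intervalIntegral.integral_of_le hxs,
      intervalIntegral.integral_comp_sub_right (fun z => z ^ (2 * h - 2)) x, sub_self,
      integral_rpow (Or.inl hgam), he,
      Real.zero_rpow (by linarith : 2 * h - 1 ≠ 0), sub_zero]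
  rw [← Ioo_union_Ico_eq_Ioo hx hxs, lintegral_union measurableSet_Ico hdisj, hA, hB,
    ← ENNReal.ofReal_add (by positivity) (by positivity), ← add_div]

lemma inner_y_ge {h : ℝ} (hh : 1 / 2 < h) (hh2 : h < 1) {s x : ℝ} (hs : 0 ≤ s) (hsx : s ≤ x) :
    ∫⁻ y in Ioo 0 s, ENNReal.ofReal (|x - y| ^ (2 * h - 2))
      = ENNReal.ofReal ((x ^ (2 * h - 1) - (x - s) ^ (2 * h - 1)) / (2 * h - 1)) := by
  have hgam : (-1:ℝ) < 2 * h - 2 := by linarith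
  have he : 2 * h - 2 + 1 = 2 * h - 1 := by ring
  have hcong : ∫⁻ y in Ioo (0:ℝ) s, ENNReal.ofReal (|x - y| ^ (2 * h - 2))
      = ∫⁻ y in Ioo (0:ℝ) s, ENNReal.ofReal ((x - y) ^ (2 * h - 2)) := by
    apply setLIntegral_congr_fun_ae measurableSet_Ioo
    apply ae_of_all
    intro y hy
    rw [abs_of_pos (by linarith [hy.2] : (0:ℝ) < x - y)]
  rw [hcong]
  have hii : IntervalIntegrable (fun y => (x - y) ^ (2 * h - 2)) volume 0 s := by
    have := (intervalIntegral.intervalIntegrable_rpow' (a := x - s) (b := x)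
      hgam).comp_sub_left x
    rw [sub_self, sub_sub_cancel] at this
    exact this.symm
  rw [← ofReal_integral_eq_lintegral_ofReal
    (((intervalIntegrable_iff_integrableOn_Ioc_of_le hs).1 hii).mono_set Ioo_subset_Ioc_self)
    ((ae_restrict_iff' measurableSet_Ioo).2 (ae_of_all _ fun y hy =>
      Real.rpow_nonneg (by linarith [hy.2]) _))]
  congr 1
  rw [setIntegral_congr_set Ioo_ae_eq_Ioc, ← intervalIntegral.integral_of_le hs,
    intervalIntegral.integral_comp_sub_left (fun z => z ^ (2 * h - 2)) x, sub_zero,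
    integral_rpow (Or.inl hgam), he]

lemma outer_x {h : ℝ} (hh : 1 / 2 < h) (hh2 : h < 1) {s t : ℝ} (hs : 0 < s) (hst : s ≤ t) :
    ∫⁻ x in Ioo 0 t, ∫⁻ y in Ioo 0 s, ENNReal.ofReal (|x - y| ^ (2 * h - 2))
      = ENNReal.ofReal ((s ^ (2 * h) + t ^ (2 * h) - (t - s) ^ (2 * h)) / (2 * h * (2 * h - 1))) := by
  have h2h1 : (0:ℝ) < 2 * h - 1 := by linarith
  have h2h : (0:ℝ) < 2 * h := by linarith
  have hgam1 : (-1:ℝ) < 2 * h - 1 := by linarith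
  have he : 2 * h - 1 + 1 = 2 * h := by ring
  have hdisj : Disjoint (Ioo (0:ℝ) s) (Ico s t) := by
    rw [Set.disjoint_left]
    rintro y h1 h2
    exact absurd h2.1 (not_le.2 h1.2)
  have hsup : s ^ (2 * h) + (t - s) ^ (2 * h) ≤ t ^ (2 * h) := by
    have := real_superadd (p := 2 * h) (by linarith) hs.le (sub_nonneg.2 hst)
    have e2 : s + (t - s) = t := by ring
    rwa [e2] at this
  have hA : ∫⁻ x in Ioo (0:ℝ) s, (∫⁻ y in Ioo (0:ℝ) s, ENNReal.ofReal (|x - y| ^ (2 * h - 2)))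
      = ENNReal.ofReal ((s ^ (2 * h) / (2 * h) + s ^ (2 * h) / (2 * h)) / (2 * h - 1)) := by
    have hcong : ∫⁻ x in Ioo (0:ℝ) s, (∫⁻ y in Ioo (0:ℝ) s, ENNReal.ofReal (|x - y| ^ (2 * h - 2)))
        = ∫⁻ x in Ioo (0:ℝ) s,
            ENNReal.ofReal ((x ^ (2 * h - 1) + (s - x) ^ (2 * h - 1)) / (2 * h - 1)) :=
      setLIntegral_congr_fun_ae measurableSet_Ioo (ae_of_all _ fun x hx =>
        inner_y_le hh hh2 hx.1 hx.2.le)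
    rw [hcong]
    have hii1 : IntervalIntegrable (fun x : ℝ => x ^ (2 * h - 1)) volume 0 s :=
      intervalIntegral.intervalIntegrable_rpow' hgam1
    have hii2 : IntervalIntegrable (fun x : ℝ => (s - x) ^ (2 * h - 1)) volume 0 s := by
      have := (intervalIntegral.intervalIntegrable_rpow' (a := 0) (b := s)
        hgam1).comp_sub_left s
      norm_num at this
      exact this.symm
    have hii := (hii1.add hii2).div_const (2 * h - 1)
    rw [← ofReal_integral_eq_lintegral_ofReal
      (((intervalIntegrable_iff_integrableOn_Ioc_of_le hs.le).1 hii).mono_set Ioo_subset_Ioc_self)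
      ((ae_restrict_iff' measurableSet_Ioo).2 (ae_of_all _ fun x hx => div_nonneg
        (add_nonneg (Real.rpow_nonneg hx.1.le _) (Real.rpow_nonneg (by linarith [hx.2]) _))
        h2h1.le))]
    congr 1
    rw [setIntegral_congr_set Ioo_ae_eq_Ioc, ← intervalIntegral.integral_of_le hs.le,
      intervalIntegral.integral_div, intervalIntegral.integral_add hii1 hii2,
      integral_rpow (Or.inl hgam1),
      intervalIntegral.integral_comp_sub_left (fun z => z ^ (2 * h - 1)) s, sub_self, sub_zero,
      integral_rpow (Or.inl hgam1), he,
      Real.zero_rpow (by linarith : 2 * h ≠ 0), sub_zero]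
  have hB : ∫⁻ x in Ico s t, (∫⁻ y in Ioo (0:ℝ) s, ENNReal.ofReal (|x - y| ^ (2 * h - 2)))
      = ENNReal.ofReal (((t ^ (2 * h) - s ^ (2 * h)) / (2 * h) - (t - s) ^ (2 * h) / (2 * h))
          / (2 * h - 1)) := by
    rw [setLIntegral_congr Ico_ae_eq_Ioc]
    have hcong : ∫⁻ x in Ioc s t, (∫⁻ y in Ioo (0:ℝ) s, ENNReal.ofReal (|x - y| ^ (2 * h - 2)))
        = ∫⁻ x in Ioc s t,
            ENNReal.ofReal ((x ^ (2 * h - 1) - (x - s) ^ (2 * h - 1)) / (2 * h - 1)) :=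
      setLIntegral_congr_fun_ae measurableSet_Ioc (ae_of_all _ fun x hx =>
        inner_y_ge hh hh2 hs.le hx.1.le)
    rw [hcong]
    have hii1 : IntervalIntegrable (fun x : ℝ => x ^ (2 * h - 1)) volume s t :=
      intervalIntegral.intervalIntegrable_rpow' hgam1
    have hii2 : IntervalIntegrable (fun x : ℝ => (x - s) ^ (2 * h - 1)) volume s t := by
      have := (intervalIntegral.intervalIntegrable_rpow' (a := 0) (b := t - s)
        hgam1).comp_sub_right s
      rw [zero_add, sub_add_cancel] at this
      exact this
    have hii := (hii1.sub hii2).div_const (2 * h - 1)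
    rw [← ofReal_integral_eq_lintegral_ofReal
      ((intervalIntegrable_iff_integrableOn_Ioc_of_le hst).1 hii)
      ((ae_restrict_iff' measurableSet_Ioc).2 (ae_of_all _ fun x hx => div_nonneg
        (sub_nonneg.2 (Real.rpow_le_rpow (by linarith [hx.1]) (by linarith) h2h1.le))
        h2h1.le))]
    congr 1
    rw [← intervalIntegral.integral_of_le hst, intervalIntegral.integral_div,
      intervalIntegral.integral_sub hii1 hii2,
      integral_rpow (Or.inl hgam1),
      intervalIntegral.integral_comp_sub_right (fun z => z ^ (2 * h - 1)) s, sub_self,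
      integral_rpow (Or.inl hgam1), he,
      Real.zero_rpow (by linarith : 2 * h ≠ 0), sub_zero]
  rw [← Ioo_union_Ico_eq_Ioo hs hst, lintegral_union measurableSet_Ico hdisj, hA, hB,
    ← ENNReal.ofReal_add (by positivity) (div_nonneg (by
      rw [div_sub_div_same]
      apply div_nonneg _ h2h.le
      linarith [hsup]) h2h1.le)]
  congr 1
  field_simp
  ring

lemma main {h : ℝ} (hh : 1 / 2 < h) (hh2 : h < 1) {s t : ℝ} (hs : 0 ≤ s) (hst : s ≤ t) :
    ∫ u in (0:ℝ)..s, Kc h t u * Kc h s u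
      = 1 / 2 * (s ^ (2 * h) + t ^ (2 * h) - (t - s) ^ (2 * h)) := by
  rcases hs.eq_or_lt with heq | hs0
  · -- s = 0
    rw [← heq, intervalIntegral.integral_same, Real.zero_rpow (by linarith : 2 * h ≠ 0),
      sub_zero]
    ring
  have ht0 : 0 < t := lt_of_lt_of_le hs0 hst
  have hc2 : (0:ℝ) ≤ cH h ^ 2 := sq_nonneg _
  have hBeta := Beta_pos hh hh2
  have step1 : ∫ u in (0:ℝ)..s, Kc h t u * Kc h s u
      = ∫ u in (0:ℝ)..s, cH h ^ 2 * (u ^ (1 - 2 * h) * (M h t u * M h s u)) := by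
    apply intervalIntegral.integral_congr
    intro u hu
    rw [uIcc_of_le hs] at hu
    rcases hu.1.eq_or_lt with rfl | hu0
    · simp only [Kc]
      rw [if_pos ht0.le, if_pos hs]
      rw [Real.zero_rpow (by linarith : (1:ℝ) / 2 - h ≠ 0),
        Real.zero_rpow (by linarith : 1 - 2 * h ≠ 0)]
      ring
    · have hut : u ≤ t := le_trans hu.2 hst
      have hP : ∀ r, u ≤ r → (∫ x in u..r, (x - u) ^ (h - 3 / 2) * x ^ (h - 1 / 2)) = M h r u := by
        intro r hur
        rw [M_eq]
        unfold Fk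
        rw [intervalIntegral.integral_of_le hur]
        exact (setIntegral_congr_set Ioo_ae_eq_Ioc).symm
      simp only [Kc]
      rw [if_pos hut, if_pos hu.2, hP t hut, hP s hu.2]
      have hupow : u ^ ((1:ℝ) / 2 - h) * u ^ ((1:ℝ) / 2 - h) = u ^ (1 - 2 * h) := by
        rw [← Real.rpow_add hu0]
        congr 1
        ring
      linear_combination (cH h * cH h * M h t u * M h s u) * hupow
  rw [step1]
  have hmeasG : AEStronglyMeasurable
      (fun u : ℝ => cH h ^ 2 * (u ^ (1 - 2 * h) * (M h t u * M h s u)))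
      (volume.restrict (Ioo 0 s)) := by
    apply Measurable.aestronglyMeasurable
    exact ((by fun_prop : Measurable fun u : ℝ => u ^ (1 - 2 * h)).mul
      ((measurable_M h t).mul (measurable_M h s))).const_mul _
  have hnn : 0 ≤ᵐ[volume.restrict (Ioo 0 s)]
      fun u : ℝ => cH h ^ 2 * (u ^ (1 - 2 * h) * (M h t u * M h s u)) :=
    (ae_restrict_iff' measurableSet_Ioo).2 (ae_of_all _ fun u hu => mul_nonneg hc2
      (mul_nonneg (Real.rpow_nonneg hu.1.le _)
        (mul_nonneg (M_nonneg h hu.1.le) (M_nonneg h hu.1.le))))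
  rw [intervalIntegral.integral_of_le hs, ← setIntegral_congr_set Ioo_ae_eq_Ioc,
    integral_eq_lintegral_of_nonneg_ae hnn hmeasG]
  have step4 : ∫⁻ u in Ioo (0:ℝ) s,
        ENNReal.ofReal (cH h ^ 2 * (u ^ (1 - 2 * h) * (M h t u * M h s u)))
      = ENNReal.ofReal (cH h ^ 2) *
          ∫⁻ u in Ioo (0:ℝ) s, ∫⁻ x in Ioo u t, ∫⁻ y in Ioo u s, WE h u x y := by
    rw [← lintegral_const_mul' _ _ ENNReal.ofReal_ne_top]
    apply setLIntegral_congr_fun_ae measurableSet_Ioo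
    apply ae_of_all
    intro u hu
    have hu0 : 0 < u := hu.1
    have hus : u < s := hu.2
    have hut : u < t := lt_of_lt_of_le hus hst
    have hMt := ofReal_M h hh hu0 hut.le
    have hMs := ofReal_M h hh hu0 hus.le
    have inner1 : ∀ x ∈ Ioo u t, ∫⁻ y in Ioo u s, WE h u x y
        = ENNReal.ofReal (u ^ (1 - 2 * h) * Fk h u x) * ENNReal.ofReal (M h s u) := by
      intro x hx
      have hcx : 0 ≤ u ^ (1 - 2 * h) * Fk h u x := mul_nonneg (Real.rpow_nonneg hu0.le _)
        (Fk_nonneg h hx.1.le (hu0.le.trans hx.1.le))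
      have hpt : ∫⁻ y in Ioo u s, WE h u x y = ∫⁻ y in Ioo u s,
          ENNReal.ofReal (u ^ (1 - 2 * h) * Fk h u x) * ENNReal.ofReal (Fk h u y) := by
        apply setLIntegral_congr_fun_ae measurableSet_Ioo
        apply ae_of_all
        intro y _
        rw [WE, ← ENNReal.ofReal_mul hcx]
        rfl
      rw [hpt, lintegral_const_mul' _ _ ENNReal.ofReal_ne_top, ← hMs]
    have step41 : ∫⁻ x in Ioo u t, ∫⁻ y in Ioo u s, WE h u x y
        = ∫⁻ x in Ioo u t,
            ENNReal.ofReal (u ^ (1 - 2 * h) * Fk h u x) * ENNReal.ofReal (M h s u) :=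
      setLIntegral_congr_fun_ae measurableSet_Ioo (ae_of_all _ inner1)
    rw [step41, lintegral_mul_const' _ _ ENNReal.ofReal_ne_top]
    have step42 : ∫⁻ x in Ioo u t, ENNReal.ofReal (u ^ (1 - 2 * h) * Fk h u x)
        = ENNReal.ofReal (u ^ (1 - 2 * h)) * ENNReal.ofReal (M h t u) := by
      have hsplit : ∫⁻ x in Ioo u t, ENNReal.ofReal (u ^ (1 - 2 * h) * Fk h u x)
          = ∫⁻ x in Ioo u t,
              ENNReal.ofReal (u ^ (1 - 2 * h)) * ENNReal.ofReal (Fk h u x) := by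
        apply setLIntegral_congr_fun_ae measurableSet_Ioo
        apply ae_of_all
        intro x _
        rw [ENNReal.ofReal_mul (Real.rpow_nonneg hu0.le _)]
      rw [hsplit, lintegral_const_mul' _ _ ENNReal.ofReal_ne_top, ← hMt]
    rw [step42]
    rw [ENNReal.ofReal_mul hc2, ENNReal.ofReal_mul (Real.rpow_nonneg hu0.le _),
      ENNReal.ofReal_mul (M_nonneg h hu0.le)]
    ring
  rw [step4]
  rw [left_eq h t s hst, lintegral_swap3 _ (measurable_V h t s), right_eq h t s]
  have step6 : ∫⁻ x in Ioo (0:ℝ) t, ∫⁻ y in Ioo (0:ℝ) s, ∫⁻ u in Ioo 0 (min x y), WE h u x y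
      = ENNReal.ofReal (Beta (2 - 2 * h) (h - 1 / 2)) *
          ∫⁻ x in Ioo (0:ℝ) t, ∫⁻ y in Ioo (0:ℝ) s, ENNReal.ofReal (|x - y| ^ (2 * h - 2)) := by
    rw [← lintegral_const_mul' _ _ ENNReal.ofReal_ne_top]
    apply setLIntegral_congr_fun_ae measurableSet_Ioo
    apply ae_of_all
    intro x hx
    rw [← lintegral_const_mul' _ _ ENNReal.ofReal_ne_top]
    apply setLIntegral_congr_fun_ae measurableSet_Ioo
    have hae : ∀ᵐ (y : ℝ), y ≠ x := by
      refine ae_iff.2 ?_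
      have hset : {a : ℝ | ¬ a ≠ x} = {x} := by
        ext a
        simp
      rw [hset]
      exact measure_singleton x
    refine hae.mono fun y hy hmem => ?_
    exact inner_u hh hh2 hx.1 hmem.1 (Ne.symm hy)
  rw [step6, outer_x hh hh2 hs0 hst]
  have hval0 : (0:ℝ) ≤ (s ^ (2 * h) + t ^ (2 * h) - (t - s) ^ (2 * h)) / (2 * h * (2 * h - 1)) := by
    apply div_nonneg
    · have h1 : (t - s) ^ (2 * h) ≤ t ^ (2 * h) :=
        Real.rpow_le_rpow (sub_nonneg.2 hst) (by linarith) (by linarith)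
      have h2 : (0:ℝ) ≤ s ^ (2 * h) := Real.rpow_nonneg hs0.le _
      linarith
    · nlinarith
  rw [← ENNReal.ofReal_mul hBeta.le, ← ENNReal.ofReal_mul hc2,
    ENNReal.toReal_ofReal (mul_nonneg hc2 (mul_nonneg hBeta.le hval0))]
  rw [cH_sq hh hh2]
  have h2h : (2:ℝ) * h ≠ 0 := by linarith
  have h2h1 : (2:ℝ) * h - 1 ≠ 0 := by linarith
  set B := Beta (2 - 2 * h) (h - 1 / 2) with hB
  set X := s ^ (2 * h) + t ^ (2 * h) - (t - s) ^ (2 * h) with hX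
  have hhalf : h * (2 * h - 1) / (2 * h * (2 * h - 1)) = 1 / 2 := by
    rw [div_eq_div_iff (mul_ne_zero h2h h2h1) two_ne_zero]
    ring
  calc h * (2 * h - 1) / B * (B * (X / (2 * h * (2 * h - 1))))
      = X * (B / B) * (h * (2 * h - 1) / (2 * h * (2 * h - 1))) := by ring
    _ = 1 / 2 * X := by rw [div_self hBeta.ne', hhalf]; ring

end FBMAux

theorem RH_eq_fBM_cov (H : ℝ → ℝ) (hmeas : Measurable H)
    (hH : ∀ t, 0 ≤ t → H t ∈ Set.Ioo (1 / 2 : ℝ) 1) :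
    (∀ s t : ℝ, 0 ≤ s → 0 ≤ t → H t = H s →
        RH H t s = 1 / 2 * (s ^ (2 * H t) + t ^ (2 * H t) - |t - s| ^ (2 * H t)))
      ∧ ∀ t : ℝ, 0 ≤ t → RH H t t = t ^ (2 * H t) := by
  have part1 : ∀ s t : ℝ, 0 ≤ s → 0 ≤ t → H t = H s →
      RH H t s = 1 / 2 * (s ^ (2 * H t) + t ^ (2 * H t) - |t - s| ^ (2 * H t)) := by
    intro s t hs ht hHeq
    obtain ⟨hh, hh2⟩ := hH t ht
    rcases le_total s t with hst | hts
    · rw [RH, min_eq_left hst]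
      have hcong : ∀ u, KH H t u * KH H s u = FBMAux.Kc (H t) t u * FBMAux.Kc (H t) s u := by
        intro u
        rw [FBMAux.KH_eq_Kc H t u, FBMAux.KH_eq_Kc H s u, ← hHeq]
      have heq2 := intervalIntegral.integral_congr (a := 0) (b := s) (μ := volume)
        (f := fun u => KH H t u * KH H s u)
        (g := fun u => FBMAux.Kc (H t) t u * FBMAux.Kc (H t) s u) (fun u _ => hcong u)
      rw [heq2, abs_of_nonneg (sub_nonneg.2 hst)]
      exact FBMAux.main hh hh2 hs hst
    · rw [RH, min_eq_right hts]
      have hcong : ∀ u, KH H t u * KH H s u = FBMAux.Kc (H t) s u * FBMAux.Kc (H t) t u := by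
        intro u
        rw [FBMAux.KH_eq_Kc H t u, FBMAux.KH_eq_Kc H s u, ← hHeq]
        ring
      have heq2 := intervalIntegral.integral_congr (a := 0) (b := t) (μ := volume)
        (f := fun u => KH H t u * KH H s u)
        (g := fun u => FBMAux.Kc (H t) s u * FBMAux.Kc (H t) t u) (fun u _ => hcong u)
      rw [heq2, abs_of_nonpos (sub_nonpos.2 hts), neg_sub]
      rw [FBMAux.main hh hh2 ht hts]
      ring
  refine ⟨part1, fun t ht => ?_⟩
  have hpt := part1 t t ht ht rfl
  rw [hpt, sub_self, abs_zero,
    Real.zero_rpow (by have h1 := (hH t ht).1; intro hc; linarith : 2 * H t ≠ 0)]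
  ring
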